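/- Let I be a monomial ideal of R = K[x_1,…,x_n], let m = (x_1,…,x_n), let α_1,…,α_s be positive integers, and let y_1,…,y_s be distinct variables of R such that m ∉ Ass(R/(I + (y_1^{α_1}))) and, for each i = 2,…,s, m ∉ Ass(R/((I : ∏_{j=1}^{i−1} y_j^{α_j}) + (y_i^{α_i}))). If ∏_{i=1}^s y_i^{α_i} ∈ I, then m ∉ Ass(R/I). -/

import Mathlib

open MvPolynomial

/-- `I` is an ideal of `K[x_1,…,x_n]` generated by monomials. -/
def IsMonomialIdeal {K : Type*} [Field K] {n : ℕ}
    (I : Ideal (MvPolynomial (Fin n) K)) : Prop :=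
  ∃ S : Set (Fin n →₀ ℕ),
    I = Ideal.span ((fun e => MvPolynomial.monomial e (1 : K)) '' S)

section Aux

variable {R : Type*} [CommRing R]

lemma aux_ann_span_mk (I : Ideal R) (f : R) :
    (Submodule.span R {Ideal.Quotient.mk I f}).annihilator = I.colon (Ideal.span {f}) := by
  ext r
  rw [Submodule.mem_annihilator_span_singleton, Ideal.mem_colon_span_singleton]
  have h : r • (Ideal.Quotient.mk I f) = Ideal.Quotient.mk I (r * f) := rfl
  rw [h, Ideal.Quotient.eq_zero_iff_mem]

lemma aux_mem_ass_quot_iff [IsNoetherianRing R] (I p : Ideal R) :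
    p ∈ associatedPrimes R (R ⧸ I) ↔ p.IsPrime ∧ ∃ f : R, p = I.colon (Ideal.span {f}) := by
  have key : ∀ f : R, Submodule.colon (⊥ : Submodule R (R ⧸ I)) {Ideal.Quotient.mk I f}
      = I.colon (Ideal.span {f}) := by
    intro f; ext r
    rw [Submodule.mem_colon_singleton, Submodule.mem_bot, Ideal.mem_colon_span_singleton]
    exact Ideal.Quotient.eq_zero_iff_mem
  rw [AssociatedPrimes.mem_iff, isAssociatedPrime_iff]
  refine and_congr_right fun _ => ⟨?_, ?_⟩
  · rintro ⟨x, hx⟩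
    obtain ⟨f, rfl⟩ := Ideal.Quotient.mk_surjective x
    exact ⟨f, by rw [hx, key]⟩
  · rintro ⟨f, hf⟩
    exact ⟨Ideal.Quotient.mk I f, by rw [hf, key]⟩

lemma aux_colon_singleton_mul (I : Ideal R) (a b : R) :
    (I.colon (Ideal.span {a})).colon (Ideal.span {b}) = I.colon (Ideal.span {a * b}) := by
  ext r
  simp only [Ideal.mem_colon_span_singleton]
  rw [show r * b * a = r * (a * b) by ring]

lemma aux_colon_one (I : Ideal R) : I.colon (Ideal.span {(1 : R)}) = I := by
  ext r
  rw [Ideal.mem_colon_span_singleton, mul_one]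

lemma aux_colon_eq_top (I : Ideal R) {f : R} (hf : f ∈ I) :
    I.colon (Ideal.span {f}) = ⊤ := by
  rw [Ideal.eq_top_iff_one, Ideal.mem_colon_span_singleton, one_mul]
  exact hf

lemma aux_top_colon (f : R) : (⊤ : Ideal R).colon (Ideal.span {f}) = ⊤ := by
  rw [Ideal.eq_top_iff_one, Ideal.mem_colon_span_singleton]
  trivial

lemma aux_key (I p : Ideal R) (f g : R) (hp : p.IsPrime)
    (hpf : p = I.colon (Ideal.span {f})) :
    (∃ h : R, p = (I.colon (Ideal.span {g})).colon (Ideal.span {h})) ∨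
      p = (I + Ideal.span {g}).colon (Ideal.span {f}) := by
  by_cases hcase : ∃ r, r ∉ p ∧ r * f ∈ I + Ideal.span {g}
  · obtain ⟨r, hr, hrf⟩ := hcase
    rw [Submodule.add_eq_sup, Submodule.mem_sup] at hrf
    obtain ⟨a, ha, b, hb, hab⟩ := hrf
    obtain ⟨c, hc⟩ := Ideal.mem_span_singleton'.mp hb
    rw [← hc] at hab
    refine Or.inl ⟨c, ?_⟩
    rw [aux_colon_singleton_mul]
    ext x
    rw [Ideal.mem_colon_span_singleton]
    constructor
    · intro hx
      have hx' := hx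
      rw [hpf, Ideal.mem_colon_span_singleton] at hx'
      have h1 : x * (r * f) ∈ I := by
        have := I.mul_mem_left r hx'
        rwa [show r * (x * f) = x * (r * f) by ring] at this
      have h2 : x * (r * f) = x * a + x * (g * c) := by rw [← hab]; ring
      have h3 := I.sub_mem h1 (I.mul_mem_left x ha)
      rwa [h2, add_sub_cancel_left] at h3
    · intro hx
      have h1 : x * (r * f) ∈ I := by
        rw [show x * (r * f) = x * a + x * (g * c) by rw [← hab]; ring]
        exact I.add_mem (I.mul_mem_left x ha) hx
      have hxr : x * r ∈ p := by
        rw [hpf, Ideal.mem_colon_span_singleton,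
          show x * r * f = x * (r * f) by ring]
        exact h1
      rcases hp.mem_or_mem hxr with h | h
      · exact h
      · exact absurd h hr
  · push_neg at hcase
    refine Or.inr ?_
    ext x
    rw [Ideal.mem_colon_span_singleton]
    constructor
    · intro hx
      rw [hpf, Ideal.mem_colon_span_singleton] at hx
      rw [Submodule.add_eq_sup]
      exact Submodule.mem_sup_left hx
    · intro hx
      by_contra hxp
      exact hcase x hxp hx

end Aux

/-- Let `I` be a monomial ideal of `R = K[x_1,…,x_n]`,
`m = (x_1,…,x_n)`, `α_1,…,α_s ≥ 1`, and `y_1,…,y_s` distinct variables such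
that `m ∉ Ass (R / (I + (y_1^{α_1})))` and, for `i = 2,…,s`,
`m ∉ Ass (R / ((I : ∏_{j<i} y_j^{α_j}) + (y_i^{α_i})))`.  If
`∏_{i=1}^s y_i^{α_i} ∈ I`, then `m ∉ Ass (R / I)`. -/
theorem maximal_not_associated_of_steps_and_prod_mem
    {K : Type*} [Field K] {n s : ℕ}
    (I : Ideal (MvPolynomial (Fin n) K)) (hI : IsMonomialIdeal I)
    (α : Fin s → ℕ) (hα : ∀ i, 1 ≤ α i)
    (y : Fin s → Fin n) (hy : Function.Injective y)
    (h1 : ∀ i : Fin s, (i : ℕ) = 0 →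
      Ideal.span (Set.range (X : Fin n → MvPolynomial (Fin n) K)) ∉
        associatedPrimes (MvPolynomial (Fin n) K)
          (MvPolynomial (Fin n) K ⧸
            (I + Ideal.span {(X (y i) : MvPolynomial (Fin n) K) ^ α i})))
    (h2 : ∀ i : Fin s, 0 < (i : ℕ) →
      Ideal.span (Set.range (X : Fin n → MvPolynomial (Fin n) K)) ∉
        associatedPrimes (MvPolynomial (Fin n) K)
          (MvPolynomial (Fin n) K ⧸
            (I.colon (Ideal.span
                {∏ j ∈ Finset.univ.filter (fun j => j < i),
                  (X (y j) : MvPolynomial (Fin n) K) ^ α j}) +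
              Ideal.span {(X (y i) : MvPolynomial (Fin n) K) ^ α i})))
    (hprod : (∏ i, (X (y i) : MvPolynomial (Fin n) K) ^ α i) ∈ I) :
    Ideal.span (Set.range (X : Fin n → MvPolynomial (Fin n) K)) ∉
      associatedPrimes (MvPolynomial (Fin n) K)
        (MvPolynomial (Fin n) K ⧸ I) := by
  set R' := MvPolynomial (Fin n) K
  set m : Ideal R' := Ideal.span (Set.range (X : Fin n → R')) with hm
  intro hmem
  rw [aux_mem_ass_quot_iff] at hmem
  obtain ⟨hprime, f0, hf0⟩ := hmem
  -- partial products
  set F : ℕ → R' := fun t =>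
    ∏ j ∈ Finset.univ.filter (fun j : Fin s => (j : ℕ) < t), (X (y j) : R') ^ α j with hF
  have hF0 : F 0 = 1 := by
    simp [hF]
  have hFs : F s = ∏ i, (X (y i) : R') ^ α i := by
    rw [hF]
    exact Finset.prod_congr (Finset.filter_true_of_mem fun j _ => j.isLt) fun _ _ => rfl
  have hFsucc : ∀ t (ht : t < s),
      F (t + 1) = F t * (X (y ⟨t, ht⟩) : R') ^ α ⟨t, ht⟩ := by
    intro t ht
    have hins : Finset.univ.filter (fun j : Fin s => (j : ℕ) < t + 1)
        = insert (⟨t, ht⟩ : Fin s) (Finset.univ.filter (fun j : Fin s => (j : ℕ) < t)) := by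
      ext j
      simp only [Finset.mem_filter, Finset.mem_univ, true_and, Finset.mem_insert, Fin.ext_iff]
      omega
    rw [hF]
    simp only
    rw [hins, Finset.prod_insert (by simp), mul_comm]
  have claim : ∀ k t, s = t + k → ∀ f : R',
      m = (I.colon (Ideal.span {F t})).colon (Ideal.span {f}) → False := by
    intro k
    induction k with
    | zero =>
      intro t hst f hf
      have ht : t = s := by omega
      subst ht
      rw [aux_colon_eq_top I (hFs ▸ hprod), aux_top_colon] at hf
      exact hprime.ne_top hf
    | succ k ih =>
      intro t hst f hf
      have ht : t < s := by omega
      set i : Fin s := ⟨t, ht⟩ with hi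
      set g : R' := (X (y i) : R') ^ α i with hg
      rcases aux_key (I.colon (Ideal.span {F t})) m f g hprime hf with ⟨h', hh'⟩ | hright
      · rw [aux_colon_singleton_mul, aux_colon_singleton_mul,
          show F t * (g * h') = F (t + 1) * h' by rw [hFsucc t ht]; ring,
          ← aux_colon_singleton_mul] at hh'
        exact ih (t + 1) (by omega) h' hh'
      · have hFilter : (∏ j ∈ Finset.univ.filter (fun j => j < i), (X (y j) : R') ^ α j)
            = F t := by
          rw [hF]
          refine Finset.prod_congr ?_ fun _ _ => rfl
          ext j
          simp only [Finset.mem_filter, Finset.mem_univ, true_and, Fin.lt_def, hi]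
        by_cases ht0 : t = 0
        · refine h1 i (by simp [hi, ht0]) ?_
          rw [aux_mem_ass_quot_iff]
          refine ⟨hprime, f, ?_⟩
          have : F t = 1 := by rw [ht0, hF0]
          rw [this, aux_colon_one] at hright
          exact hright
        · refine h2 i (by simp [hi]; omega) ?_
          rw [aux_mem_ass_quot_iff]
          exact ⟨hprime, f, by rw [hFilter]; exact hright⟩
  refine claim s 0 (by omega) f0 ?_
  rw [hF0, aux_colon_one]
  exact hf0
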